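/- For the eventual consensus problem with voting threshold h, the conditions d + t < h (safety) and q + t < n − h (liveness) are simultaneously satisfiable for some h ∈ (n/2, n] if and only if n > 2t + d + q (assuming the natural constraint that safety safety threshold exceeds n/2). -/
import Mathlib


/-- Eventual consensus threshold characterization: the safety condition `d + t < h` and
the liveness condition `q + t < n - h` are simultaneously satisfiable for some threshold
`h ∈ (n/2, n]` if and only if `n > 2t + d + q` and `n > 2(q + t)`. -/
theorem stmt_8 (n t d q : ℝ) (ht : 0 ≤ t) (hd : 0 ≤ d) (hq : 0 ≤ q) (hn : 0 < n) :
    (∃ h : ℝ, n / 2 < h ∧ h ≤ n ∧ d + t < h ∧ q + t < n - h) ↔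
      (n > 2 * t + d + q ∧ n > 2 * (q + t)) := by
  constructor
  · rintro ⟨h, h1, h2, h3, h4⟩
    constructor <;> linarith
  · rintro ⟨h1, h2⟩
    refine ⟨(max (n / 2) (d + t) + (n - q - t)) / 2, ?_, ?_, ?_, ?_⟩
    · have := le_max_left (n / 2) (d + t)
      have hlt : max (n / 2) (d + t) < n - q - t := by
        rcases max_cases (n / 2) (d + t) with ⟨he, _⟩ | ⟨he, _⟩ <;> rw [he] <;> linarith
      linarith
    · have hlt : max (n / 2) (d + t) < n - q - t := by
        rcases max_cases (n / 2) (d + t) with ⟨he, _⟩ | ⟨he, _⟩ <;> rw [he] <;> linarith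
      linarith
    · have := le_max_right (n / 2) (d + t)
      have hlt : max (n / 2) (d + t) < n - q - t := by
        rcases max_cases (n / 2) (d + t) with ⟨he, _⟩ | ⟨he, _⟩ <;> rw [he] <;> linarith
      linarith
    · have hlt : max (n / 2) (d + t) < n - q - t := by
        rcases max_cases (n / 2) (d + t) with ⟨he, _⟩ | ⟨he, _⟩ <;> rw [he] <;> linarith
      have := le_max_left (n / 2) (d + t)
      linarith
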